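/- For k ∈ ℝ, k ≠ 0, the function ψ(ϱ) = sinh(2k√(2ϱ)) − 2k√(2ϱ)·cosh(2k√(2ϱ)) + (8k²/3)·ϱ·sinh(2k√(2ϱ)), defined for ϱ > 0 and extended by ψ(0) = 0, satisfies the ODE ϱ ψ'' − (3/2) ψ' − 2k² ψ = 0 on ϱ > 0 and ψ(ϱ) → 0 as ϱ ↓ 0. -/

import Mathlib

open Real Filter

lemma sqrtD5 {ϱ : ℝ} (h : 0 < ϱ) :
    HasDerivAt (fun x : ℝ => Real.sqrt (2 * x)) (1 / Real.sqrt (2 * ϱ)) ϱ := by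
  have h1 : HasDerivAt (fun x : ℝ => 2 * x) 2 ϱ := by
    simpa using (hasDerivAt_id ϱ).const_mul 2
  have h2 := (Real.hasDerivAt_sqrt (by positivity : (2:ℝ) * ϱ ≠ 0)).comp ϱ h1
  refine h2.congr_deriv ?_
  have : Real.sqrt (2 * ϱ) ≠ 0 := by positivity
  field_simp

lemma d1_5 (k : ℝ) {ϱ : ℝ} (h : 0 < ϱ) :
    HasDerivAt (fun x => Real.sinh (2 * k * Real.sqrt (2 * x))
        - 2 * k * Real.sqrt (2 * x) * Real.cosh (2 * k * Real.sqrt (2 * x))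
        + 8 * k ^ 2 / 3 * x * Real.sinh (2 * k * Real.sqrt (2 * x)))
      (-(4 * k ^ 2 / 3) * Real.sinh (2 * k * Real.sqrt (2 * ϱ))
        + 8 * k ^ 3 / 3 * Real.sqrt (2 * ϱ) * Real.cosh (2 * k * Real.sqrt (2 * ϱ))) ϱ := by
  have hu := sqrtD5 h
  have hu0 : Real.sqrt (2 * ϱ) ≠ 0 := by positivity
  have hu2 : Real.sqrt (2 * ϱ) ^ 2 = 2 * ϱ := Real.sq_sqrt (by positivity)
  have hs : HasDerivAt (fun x : ℝ => 2 * k * Real.sqrt (2 * x))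
      (2 * k * (1 / Real.sqrt (2 * ϱ))) ϱ := hu.const_mul (2 * k)
  have h1 := hs.sinh
  have h2 := hs.mul hs.cosh
  have h3 := ((hasDerivAt_id ϱ).const_mul (8 * k ^ 2 / 3)).mul hs.sinh
  have H := (h1.sub h2).add h3
  refine H.congr_deriv ?_
  set u := Real.sqrt (2 * ϱ) with hu_def
  rw [show ϱ = u ^ 2 / 2 by linarith [hu2]]
  simp only [id]
  field_simp
  ring

lemma d2_5 (k : ℝ) {ϱ : ℝ} (h : 0 < ϱ) :
    HasDerivAt (fun x => -(4 * k ^ 2 / 3) * Real.sinh (2 * k * Real.sqrt (2 * x))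
        + 8 * k ^ 3 / 3 * Real.sqrt (2 * x) * Real.cosh (2 * k * Real.sqrt (2 * x)))
      (16 * k ^ 4 / 3 * Real.sinh (2 * k * Real.sqrt (2 * ϱ))) ϱ := by
  have hu := sqrtD5 h
  have hu0 : Real.sqrt (2 * ϱ) ≠ 0 := by positivity
  have hs : HasDerivAt (fun x : ℝ => 2 * k * Real.sqrt (2 * x))
      (2 * k * (1 / Real.sqrt (2 * ϱ))) ϱ := hu.const_mul (2 * k)
  have h1 := hs.sinh.const_mul (-(4 * k ^ 2 / 3))
  have h2 := ((hu.const_mul (8 * k ^ 3 / 3)).mul hs.cosh)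
  have H := h1.add h2
  refine H.congr_deriv ?_
  field_simp
  ring

/-- For `k ≠ 0`, the function
`ψ(ϱ) = sinh(2k√(2ϱ)) − 2k√(2ϱ) cosh(2k√(2ϱ)) + (8k²/3) ϱ sinh(2k√(2ϱ))`
(extended by `ψ(0) = 0`) satisfies `ϱ ψ'' − (3/2) ψ' − 2k² ψ = 0` on `ϱ > 0`
and `ψ(ϱ) → 0` as `ϱ ↓ 0`. -/
theorem stmt5 (k : ℝ) (hk : k ≠ 0) (ψ : ℝ → ℝ)
    (hψ : ∀ ϱ : ℝ, 0 < ϱ →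
      ψ ϱ = Real.sinh (2 * k * Real.sqrt (2 * ϱ))
        - 2 * k * Real.sqrt (2 * ϱ) * Real.cosh (2 * k * Real.sqrt (2 * ϱ))
        + 8 * k ^ 2 / 3 * ϱ * Real.sinh (2 * k * Real.sqrt (2 * ϱ)))
    (hψ0 : ψ 0 = 0) :
    (∀ ϱ : ℝ, 0 < ϱ →
      ϱ * deriv (deriv ψ) ϱ - 3 / 2 * deriv ψ ϱ - 2 * k ^ 2 * ψ ϱ = 0) ∧
    Tendsto ψ (nhdsWithin 0 (Set.Ioi 0)) (nhds 0) := by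
  have heq : ∀ {ϱ : ℝ}, 0 < ϱ → ψ =ᶠ[nhds ϱ]
      (fun x => Real.sinh (2 * k * Real.sqrt (2 * x))
        - 2 * k * Real.sqrt (2 * x) * Real.cosh (2 * k * Real.sqrt (2 * x))
        + 8 * k ^ 2 / 3 * x * Real.sinh (2 * k * Real.sqrt (2 * x))) := by
    intro ϱ h
    filter_upwards [Ioi_mem_nhds h] with y hy using hψ y hy
  have hD1 : ∀ {ϱ : ℝ}, 0 < ϱ → HasDerivAt ψ
      (-(4 * k ^ 2 / 3) * Real.sinh (2 * k * Real.sqrt (2 * ϱ))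
        + 8 * k ^ 3 / 3 * Real.sqrt (2 * ϱ) * Real.cosh (2 * k * Real.sqrt (2 * ϱ))) ϱ :=
    fun h => (d1_5 k h).congr_of_eventuallyEq (heq h)
  constructor
  · intro ϱ h
    have hd1 : ∀ {y : ℝ}, 0 < y → deriv ψ y =
        -(4 * k ^ 2 / 3) * Real.sinh (2 * k * Real.sqrt (2 * y))
          + 8 * k ^ 3 / 3 * Real.sqrt (2 * y) * Real.cosh (2 * k * Real.sqrt (2 * y)) :=
      fun hy => (hD1 hy).deriv
    have heq2 : deriv ψ =ᶠ[nhds ϱ]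
        (fun x => -(4 * k ^ 2 / 3) * Real.sinh (2 * k * Real.sqrt (2 * x))
          + 8 * k ^ 3 / 3 * Real.sqrt (2 * x) * Real.cosh (2 * k * Real.sqrt (2 * x))) := by
      filter_upwards [Ioi_mem_nhds h] with y hy using hd1 hy
    have hD2 : HasDerivAt (deriv ψ)
        (16 * k ^ 4 / 3 * Real.sinh (2 * k * Real.sqrt (2 * ϱ))) ϱ :=
      (d2_5 k h).congr_of_eventuallyEq heq2
    rw [hD2.deriv, hd1 h, hψ ϱ h]
    have hu2 : Real.sqrt (2 * ϱ) ^ 2 = 2 * ϱ := Real.sq_sqrt (by positivity)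
    ring_nf
  · have hc : ContinuousAt (fun x => Real.sinh (2 * k * Real.sqrt (2 * x))
        - 2 * k * Real.sqrt (2 * x) * Real.cosh (2 * k * Real.sqrt (2 * x))
        + 8 * k ^ 2 / 3 * x * Real.sinh (2 * k * Real.sqrt (2 * x))) 0 := by
      fun_prop
    have h0 : (fun x => Real.sinh (2 * k * Real.sqrt (2 * x))
        - 2 * k * Real.sqrt (2 * x) * Real.cosh (2 * k * Real.sqrt (2 * x))
        + 8 * k ^ 2 / 3 * x * Real.sinh (2 * k * Real.sqrt (2 * x))) 0 = 0 := by simp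
    have ht : Tendsto (fun x => Real.sinh (2 * k * Real.sqrt (2 * x))
        - 2 * k * Real.sqrt (2 * x) * Real.cosh (2 * k * Real.sqrt (2 * x))
        + 8 * k ^ 2 / 3 * x * Real.sinh (2 * k * Real.sqrt (2 * x))) (nhds 0) (nhds 0) := by
      simpa using hc.tendsto
    refine (ht.mono_left nhdsWithin_le_nhds).congr' ?_
    filter_upwards [self_mem_nhdsWithin] with y hy using (hψ y hy).symm
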